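/- arXiv:1112.2869 — 6 statements merged into one kernel-verified Lean document; each statement's English description precedes it below -/
import Mathlib

section
/- Let ℍ be a family of d ≥ N hyperplanes in general position in ℝ^N. Then the Chung-Yao lattice Θ_ℍ = {θ_H : H ∈ binom(ℍ, N)} is an interpolation lattice of degree d − N: for every function f : Θ_ℍ → ℝ there exists a unique polynomial L of degree ≤ d − N with L = f on Θ_ℍ, and L(x) = Σ_{H ∈ binom(ℍ,N)} f(θ_H) ∏_{ℓ ∉ H} (⟨n_ℓ, x⟩ − c_ℓ)/(⟨n_ℓ, θ_H⟩ − c_ℓ). -/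
noncomputable def slackEquiv (N m : ℕ) :
    {f : Fin N → ℕ // ∑ i, f i ≤ m} ≃ {g : Fin (N+1) → ℕ // ∑ i, g i = m} where
  toFun f := ⟨Fin.snoc f.1 (m - ∑ i, f.1 i), by
    rw [Fin.sum_univ_castSucc]
    simp only [Fin.snoc_castSucc, Fin.snoc_last]
    have := f.2; omega⟩
  invFun g := ⟨fun i => g.1 i.castSucc, by
    have := g.2
    rw [Fin.sum_univ_castSucc] at this
    show ∑ i : Fin N, g.1 i.castSucc ≤ m
    omega⟩
  left_inv f := by
    ext i
    simp [Fin.snoc_castSucc]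
  right_inv g := by
    ext i
    refine Fin.lastCases ?_ (fun j => ?_) i
    · have := g.2
      rw [Fin.sum_univ_castSucc] at this
      simp only [Fin.snoc_last]
      show m - ∑ i : Fin N, g.1 i.castSucc = _
      omega
    · simp [Fin.snoc_castSucc]

noncomputable def finsuppLeEquiv (N m : ℕ) :
    {s : Fin N →₀ ℕ // (s.sum fun _ e => e) ≤ m} ≃ {f : Fin N → ℕ // ∑ i, f i ≤ m} :=
  Finsupp.equivFunOnFinite.subtypeEquiv (fun s => by
    rw [Finsupp.sum_fintype _ _ (fun _ => rfl)]
    rfl)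

noncomputable def bigEquiv (N m : ℕ) :
    {s : Fin N →₀ ℕ // (s.sum fun _ e => e) ≤ m} ≃ Sym (Fin (N+1)) m :=
  ((finsuppLeEquiv N m).trans (slackEquiv N m)).trans
    (Sym.equivNatSumOfFintype (Fin (N+1)) m).symm

noncomputable instance instFinsuppLe (N m : ℕ) :
    Fintype {s : Fin N →₀ ℕ // (s.sum fun _ e => e) ≤ m} :=
  Fintype.ofEquiv _ (bigEquiv N m).symm

lemma card_finsupp_le_sum (N m : ℕ) :
    Fintype.card {s : Fin N →₀ ℕ // (s.sum fun _ e => e) ≤ m} = (N + m).choose m := by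
  rw [Fintype.card_congr (bigEquiv N m), Sym.card_sym_eq_choose]
  simp

lemma finrank_restrictTotalDegree' (N m : ℕ) :
    Module.finrank ℝ (MvPolynomial.restrictTotalDegree (Fin N) ℝ m) = (N + m).choose m := by
  haveI : Fintype ({n : Fin N →₀ ℕ | (n.sum fun _ e => e) ≤ m} : Set (Fin N →₀ ℕ)) :=
    instFinsuppLe N m
  refine (Module.finrank_eq_card_basis
    (MvPolynomial.basisRestrictSupport ℝ {n : Fin N →₀ ℕ | (n.sum fun _ e => e) ≤ m} :
      Module.Basis _ ℝ (MvPolynomial.restrictTotalDegree (Fin N) ℝ m))).trans ?_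
  rw [Fintype.card_congr ((Equiv.subtypeEquivRight (fun _ => Iff.rfl)) :
    ({n : Fin N →₀ ℕ | (n.sum fun _ e => e) ≤ m} : Set (Fin N →₀ ℕ)) ≃
      {s : Fin N →₀ ℕ // (s.sum fun _ e => e) ≤ m})]
  exact card_finsupp_le_sum N m

/-- Chung–Yao theorem: if `ℍ = {ℓ_1, …, ℓ_d}`, `d ≥ N`, is a family of hyperplanes in
general position in `ℝ^N` (each `N`-subset `H` has a unique common point `θ H`, and
`H ↦ θ H` is injective), then the Chung–Yao lattice `{θ H}` is an interpolation lattice of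
degree `d - N`: every `f` has a unique interpolant `L` of total degree `≤ d - N`, and this
interpolant is given by the Chung–Yao formula. -/
theorem stmt_2 (N d : ℕ) (hN : 1 ≤ N) (hd : N ≤ d)
    (n : Fin d → EuclideanSpace ℝ (Fin N)) (c : Fin d → ℝ)
    (hgp : ∀ g : Fin N → Fin d, StrictMono g →
      Matrix.det (Matrix.of fun i j => n (g i) j) ≠ 0)
    (θ : Finset (Fin d) → EuclideanSpace ℝ (Fin N))
    (hθ : ∀ H : Finset (Fin d), H.card = N → ∀ i ∈ H, (inner ℝ (n i) (θ H) : ℝ) = c i)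
    (hinj : ∀ H H' : Finset (Fin d), H.card = N → H'.card = N → θ H = θ H' → H = H')
    (f : EuclideanSpace ℝ (Fin N) → ℝ) :
    (∃! L : MvPolynomial (Fin N) ℝ, L.totalDegree ≤ d - N ∧
      ∀ H : Finset (Fin d), H.card = N →
        MvPolynomial.eval (fun j => θ H j) L = f (θ H)) ∧
    ∀ L : MvPolynomial (Fin N) ℝ, L.totalDegree ≤ d - N →
      (∀ H : Finset (Fin d), H.card = N →
        MvPolynomial.eval (fun j => θ H j) L = f (θ H)) →
      ∀ x : EuclideanSpace ℝ (Fin N),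
        MvPolynomial.eval (fun j => x j) L =
          ∑ H ∈ Finset.powersetCard N (Finset.univ : Finset (Fin d)),
            f (θ H) * ∏ i ∈ Hᶜ,
              ((inner ℝ (n i) x : ℝ) - c i) / ((inner ℝ (n i) (θ H) : ℝ) - c i) := by
  classical
  have hip : ∀ (a x : EuclideanSpace ℝ (Fin N)), (inner ℝ a x : ℝ) = ∑ j, a j * x j := fun a x => by
    simp [PiLp.inner_apply, RCLike.inner_apply, conj_trivial, mul_comm]
  set m := d - N with hm
  set p : Fin d → MvPolynomial (Fin N) ℝ := fun i =>
    (∑ j, MvPolynomial.C (n i j) * MvPolynomial.X j) - MvPolynomial.C (c i) with hp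
  have hevp : ∀ (i : Fin d) (x : EuclideanSpace ℝ (Fin N)),
      MvPolynomial.eval (fun j => x j) (p i) = (inner ℝ (n i) x : ℝ) - c i := by
    intro i x
    simp [hp, hip]
  have hdegp : ∀ i, (p i).totalDegree ≤ 1 := by
    intro i
    refine (MvPolynomial.totalDegree_sub _ _).trans (max_le ?_ (by simp))
    refine (MvPolynomial.totalDegree_finset_sum _ _).trans (Finset.sup_le fun j _ => ?_)
    refine (MvPolynomial.totalDegree_mul _ _).trans ?_
    simp [MvPolynomial.totalDegree_X]
  have huniq : ∀ H : Finset (Fin d), H.card = N → ∀ x y : EuclideanSpace ℝ (Fin N),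
      (∀ i ∈ H, (inner ℝ (n i) x : ℝ) = c i) → (∀ i ∈ H, (inner ℝ (n i) y : ℝ) = c i) → x = y := by
    intro H hc x y hx hy
    have hdet := hgp (fun i => H.orderEmbOfFin hc i) (H.orderEmbOfFin hc).strictMono
    have h0 : (Matrix.of fun i j => n (H.orderEmbOfFin hc i) j).mulVec (fun j => x j - y j)
        = 0 := by
      funext i
      have hxm := hx _ (H.orderEmbOfFin_mem hc i)
      have hym := hy _ (H.orderEmbOfFin_mem hc i)
      rw [hip] at hxm hym
      simp only [Matrix.mulVec, dotProduct, Matrix.of_apply, Pi.zero_apply]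
      have heq : ∑ j, n (H.orderEmbOfFin hc i) j * (x j - y j)
          = (∑ j, n (H.orderEmbOfFin hc i) j * x j)
            - ∑ j, n (H.orderEmbOfFin hc i) j * y j := by
        rw [← Finset.sum_sub_distrib]
        exact Finset.sum_congr rfl fun j _ => by ring
      rw [heq, hxm, hym, sub_self]
    have hz := Matrix.eq_zero_of_mulVec_eq_zero hdet h0
    ext j
    have := congrFun hz j
    simpa [sub_eq_zero] using this
  have hne : ∀ H : Finset (Fin d), H.card = N → ∀ i ∉ H, (inner ℝ (n i) (θ H) : ℝ) ≠ c i := by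
    intro H hc i hiH hEq
    obtain ⟨j, hj⟩ := Finset.card_pos.mp (by omega : 0 < H.card)
    have hiH' : i ∉ H.erase j := fun h => hiH (Finset.mem_of_mem_erase h)
    have hc' : (insert i (H.erase j)).card = N := by
      rw [Finset.card_insert_of_notMem hiH', Finset.card_erase_of_mem hj, hc]
      omega
    have hθH' : ∀ k ∈ insert i (H.erase j), (inner ℝ (n k) (θ H) : ℝ) = c k := by
      intro k hk
      rcases Finset.mem_insert.mp hk with h | h
      · subst h; exact hEq
      · exact hθ H hc k (Finset.mem_of_mem_erase h)
    have hEqθ : θ (insert i (H.erase j)) = θ H :=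
      huniq _ hc' _ _ (hθ _ hc') hθH'
    have hHH' : insert i (H.erase j) = H := hinj _ H hc' hc hEqθ
    exact hiH (hHH' ▸ Finset.mem_insert_self i (H.erase j))
  set P : Finset (Fin d) → MvPolynomial (Fin N) ℝ := fun H =>
    ∏ i ∈ Hᶜ, MvPolynomial.C (((inner ℝ (n i) (θ H) : ℝ) - c i)⁻¹) * p i with hPdef
  have hPdeg : ∀ H : Finset (Fin d), H.card = N → (P H).totalDegree ≤ m := by
    intro H hc
    refine (MvPolynomial.totalDegree_finset_prod _ _).trans ?_
    have hterm : ∀ i ∈ Hᶜ,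
        (MvPolynomial.C (((inner ℝ (n i) (θ H) : ℝ) - c i)⁻¹) * p i).totalDegree ≤ 1 := by
      intro i _
      exact (MvPolynomial.totalDegree_mul _ _).trans (by simpa using hdegp i)
    refine (Finset.sum_le_sum hterm).trans ?_
    simp only [Finset.sum_const, smul_eq_mul, mul_one]
    rw [Finset.card_compl, hc]
    simp [hm]
  have hPeval : ∀ (H : Finset (Fin d)) (x : EuclideanSpace ℝ (Fin N)),
      MvPolynomial.eval (fun j => x j) (P H)
        = ∏ i ∈ Hᶜ, ((inner ℝ (n i) x : ℝ) - c i) / ((inner ℝ (n i) (θ H) : ℝ) - c i) := by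
    intro H x
    simp only [hPdef, map_prod, map_mul, MvPolynomial.eval_C, hevp]
    exact Finset.prod_congr rfl fun i _ => (div_eq_inv_mul _ _).symm
  have hδ1 : ∀ H : Finset (Fin d), H.card = N →
      MvPolynomial.eval (fun j => θ H j) (P H) = 1 := by
    intro H hc
    rw [hPeval]
    exact Finset.prod_eq_one fun i hi =>
      div_self (sub_ne_zero.mpr (hne H hc i (Finset.mem_compl.mp hi)))
  have hδ0 : ∀ H H' : Finset (Fin d), H.card = N → H'.card = N → H ≠ H' →
      MvPolynomial.eval (fun j => θ H' j) (P H) = 0 := by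
    intro H H' hc hc' hne'
    obtain ⟨i, hiH', hiH⟩ : ∃ i ∈ H', i ∉ H := by
      by_contra h
      push_neg at h
      exact hne' (Finset.eq_of_subset_of_card_le h (by omega)).symm
    rw [hPeval]
    refine Finset.prod_eq_zero (Finset.mem_compl.mpr hiH) ?_
    rw [hθ H' hc' i hiH', sub_self, zero_div]
  set L₀ : MvPolynomial (Fin N) ℝ :=
    ∑ H ∈ Finset.powersetCard N (Finset.univ : Finset (Fin d)), f (θ H) • P H with hL₀
  have hmemP : ∀ H ∈ Finset.powersetCard N (Finset.univ : Finset (Fin d)), H.card = N :=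
    fun H hH => Finset.mem_powersetCard_univ.mp hH
  have hL₀deg : L₀.totalDegree ≤ m := by
    rw [hL₀]
    refine (MvPolynomial.totalDegree_finset_sum _ _).trans (Finset.sup_le fun H hH => ?_)
    exact (MvPolynomial.totalDegree_smul_le _ _).trans (hPdeg H (hmemP H hH))
  have hL₀interp : ∀ H : Finset (Fin d), H.card = N →
      MvPolynomial.eval (fun j => θ H j) L₀ = f (θ H) := by
    intro H hc
    rw [hL₀, map_sum, Finset.sum_eq_single H]
    · simp [hδ1 H hc]
    · intro H' hH' hne'
      simp [hδ0 H' H (hmemP H' hH') hc hne']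
    · intro h
      exact absurd (Finset.mem_powersetCard_univ.mpr hc) h
  have hkey : ∀ Q : MvPolynomial (Fin N) ℝ, Q.totalDegree ≤ m →
      (∀ H : Finset (Fin d), H.card = N →
        MvPolynomial.eval (fun j => θ H j) Q = 0) → Q = 0 := by
    intro Q hQdeg hQ0
    let E : (MvPolynomial.restrictTotalDegree (Fin N) ℝ m) →ₗ[ℝ]
        ((Finset.powersetCard N (Finset.univ : Finset (Fin d))) → ℝ) :=
      { toFun := fun q H => MvPolynomial.eval (fun j => θ H.1 j) q.1
        map_add' := fun a b => by funext H; simp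
        map_smul' := fun r a => by funext H; simp }
    have hEsurj : Function.Surjective E := by
      intro v
      refine ⟨⟨∑ H ∈ (Finset.powersetCard N (Finset.univ : Finset (Fin d))).attach,
        v H • P H.1, ?_⟩, ?_⟩
      · exact Submodule.sum_mem _ fun H _ => Submodule.smul_mem _ _
          ((MvPolynomial.mem_restrictTotalDegree _ _ _).mpr (hPdeg H.1 (hmemP H.1 H.2)))
      · funext H₀
        show MvPolynomial.eval _ _ = v H₀
        rw [map_sum, Finset.sum_eq_single H₀]
        · simp [hδ1 H₀.1 (hmemP H₀.1 H₀.2)]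
        · intro H' _ hne'
          have h0 : MvPolynomial.eval (fun j => θ H₀.1 j) (P H'.1) = 0 :=
            hδ0 H'.1 H₀.1 (hmemP _ H'.2) (hmemP _ H₀.2) (fun h => hne' (Subtype.ext h))
          simp [h0]
        · intro h
          exact absurd (Finset.mem_attach _ H₀) h
    have hfr : Module.finrank ℝ (MvPolynomial.restrictTotalDegree (Fin N) ℝ m)
        = Module.finrank ℝ
          ((Finset.powersetCard N (Finset.univ : Finset (Fin d))) → ℝ) := by
      rw [finrank_restrictTotalDegree', Module.finrank_fintype_fun_eq_card, Fintype.card_coe,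
        Finset.card_powersetCard, Finset.card_univ, Fintype.card_fin]
      have h1 : N + m = d := by omega
      rw [h1, hm, Nat.choose_symm hd]
    have hEinj : Function.Injective E :=
      (LinearMap.injective_iff_surjective_of_finrank_eq_finrank hfr).mpr hEsurj
    have hQV : Q ∈ MvPolynomial.restrictTotalDegree (Fin N) ℝ m :=
      (MvPolynomial.mem_restrictTotalDegree _ _ _).mpr hQdeg
    have hEQ : E ⟨Q, hQV⟩ = E 0 := by
      rw [map_zero]
      funext H
      exact hQ0 H.1 (hmemP H.1 H.2)
    have := hEinj hEQ
    simpa using congrArg Subtype.val this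
  have huniqL : ∀ L : MvPolynomial (Fin N) ℝ, L.totalDegree ≤ m →
      (∀ H : Finset (Fin d), H.card = N →
        MvPolynomial.eval (fun j => θ H j) L = f (θ H)) → L = L₀ := by
    intro L hdeg hint
    have h0 : L - L₀ = 0 := by
      refine hkey _ ((MvPolynomial.totalDegree_sub _ _).trans (max_le hdeg hL₀deg)) ?_
      intro H hc
      rw [map_sub, hint H hc, hL₀interp H hc, sub_self]
    exact sub_eq_zero.mp h0
  refine ⟨⟨L₀, ⟨hL₀deg, hL₀interp⟩, fun L hL => huniqL L hL.1 hL.2⟩, ?_⟩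
  intro L hdeg hint x
  rw [huniqL L hdeg hint, hL₀, map_sum]
  refine Finset.sum_congr rfl fun H hH => ?_
  simp [hPeval H x]
end

section
/- Given d+1 points a_0,…,a_d in ℝ converging to a point a, and f a C^d function on a neighborhood of a, the Lagrange interpolation polynomials L[a_0,…,a_d; f] converge (coefficientwise) to the Taylor polynomial of f at a of order d. -/
open Polynomial Filter Set

private lemma contDiff_polyEval (p : Polynomial ℝ) {n : WithTop ℕ∞} :
    ContDiff ℝ n (fun x => p.eval x) := by
  induction p using Polynomial.induction_on' with
  | add p q hp hq => simpa using hp.add hq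
  | monomial m a =>
      simpa [Polynomial.eval_monomial] using (contDiff_const (c := a)).mul (contDiff_id.pow m)

private lemma polyIteratedDeriv (p : Polynomial ℝ) (n : ℕ) :
    iteratedDeriv n (fun x => p.eval x) = fun x => (Polynomial.derivative^[n] p).eval x := by
  induction n with
  | zero => simp
  | succ n ih =>
      rw [iteratedDeriv_succ, ih]
      funext x
      rw [Function.iterate_succ_apply', Polynomial.deriv]

private lemma polyIterEval {p : Polynomial ℝ} {n : ℕ} (hp : p.natDegree ≤ n) (x : ℝ) :
    (Polynomial.derivative^[n] p).eval x = (n.factorial : ℝ) * p.coeff n := by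
  have h1 : (Polynomial.derivative^[n] p).natDegree ≤ 0 :=
    le_trans (p.natDegree_iterate_derivative n) (by omega)
  rw [Polynomial.eq_C_of_natDegree_le_zero h1, eval_C, Polynomial.coeff_iterate_derivative]
  simp [Nat.descFactorial_self, nsmul_eq_mul]

private lemma iteratedDerivWithin_isOpen {U : Set ℝ} (hU : IsOpen U) (g : ℝ → ℝ) (n : ℕ) :
    ∀ x ∈ U, iteratedDerivWithin n g U x = iteratedDeriv n g x := by
  induction n with
  | zero => simp
  | succ n ih =>
      intro x hx
      rw [iteratedDerivWithin_succ,
        iteratedDeriv_succ, derivWithin_of_isOpen hU hx]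
      exact Filter.EventuallyEq.deriv_eq (Filter.eventuallyEq_of_mem (hU.mem_nhds hx) ih)

private lemma genRolle {U : Set ℝ} (hU : IsOpen U) :
    ∀ (n : ℕ) (V : Set ℝ), V.OrdConnected → V ⊆ U →
      ∀ g : ℝ → ℝ, ContDiffOn ℝ n g U →
      ∀ x : Fin (n + 1) → ℝ, Function.Injective x → (∀ i, x i ∈ V) →
      (∀ i, g (x i) = 0) → ∃ ξ ∈ V, iteratedDerivWithin n g U ξ = 0 := by
  intro n
  induction n with
  | zero =>
      intro V _ _ g _ x _ hxV hgx
      exact ⟨x 0, hxV 0, by simpa using hgx 0⟩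
  | succ n IH =>
      intro V hV hVU g hg x hinj hxV hgx
      set t : Finset ℝ := Finset.univ.image x with ht
      have htc : t.card = n + 2 := by
        rw [ht, Finset.card_image_of_injective _ hinj, Finset.card_univ, Fintype.card_fin]
      set y : Fin (n + 2) → ℝ := fun i => (t.orderIsoOfFin htc i : ℝ) with hy
      have hymem : ∀ i, y i ∈ t := fun i => (t.orderIsoOfFin htc i).2
      have hyV : ∀ i, y i ∈ V := by
        intro i
        obtain ⟨j, _, hj⟩ := Finset.mem_image.mp (hymem i)
        exact hj ▸ hxV j
      have hgy : ∀ i, g (y i) = 0 := by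
        intro i
        obtain ⟨j, _, hj⟩ := Finset.mem_image.mp (hymem i)
        exact hj ▸ hgx j
      have hymono : StrictMono y := fun i j hij => by
        simpa [hy] using (t.orderIsoOfFin htc).strictMono hij
      have key : ∀ i : Fin (n + 1), ∃ z ∈ Ioo (y i.castSucc) (y i.succ), deriv g z = 0 := by
        intro i
        have hlt : y i.castSucc < y i.succ := hymono (Fin.castSucc_lt_succ (i := i))
        have hIcc : Icc (y i.castSucc) (y i.succ) ⊆ V := hV.out (hyV _) (hyV _)
        have hc : ContinuousOn g (Icc (y i.castSucc) (y i.succ)) :=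
          hg.continuousOn.mono (hIcc.trans hVU)
        exact exists_deriv_eq_zero hlt hc ((hgy _).trans (hgy _).symm)
      choose z hzI hzd using key
      have hzV : ∀ i, z i ∈ V :=
        fun i => hV.out (hyV i.castSucc) (hyV i.succ) ⟨(hzI i).1.le, (hzI i).2.le⟩
      have hzmono : StrictMono z := by
        rw [Fin.strictMono_iff_lt_succ]
        intro i
        have h1 : z i.castSucc < y (i.castSucc).succ := (hzI i.castSucc).2
        have h2 : y (i.succ).castSucc < z i.succ := (hzI i.succ).1
        rw [Fin.succ_castSucc] at h1
        exact h1.trans h2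
      have hg' : ContDiffOn ℝ n (deriv g) U :=
        hg.deriv_of_isOpen hU (by exact_mod_cast le_rfl :
          (n : WithTop ℕ∞) + 1 ≤ ((n + 1 : ℕ) : WithTop ℕ∞))
      obtain ⟨ξ, hξV, hξ0⟩ := IH V hV hVU (deriv g) hg' z hzmono.injective hzV hzd
      refine ⟨ξ, hξV, ?_⟩
      have hud : UniqueDiffOn ℝ U := hU.uniqueDiffOn
      rw [iteratedDerivWithin_succ',
        iteratedDerivWithin_congr (fun w hw => derivWithin_of_isOpen hU hw) (hVU hξV)]
      exact hξ0

private lemma meanValue {U : Set ℝ} (hU : IsOpen U) {V : Set ℝ} (hV : V.OrdConnected)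
    (hVU : V ⊆ U) {n : ℕ} {f : ℝ → ℝ} (hf : ContDiffOn ℝ n f U)
    {x : Fin (n + 1) → ℝ} (hinj : Function.Injective x) (hxV : ∀ i, x i ∈ V)
    {P : Polynomial ℝ} (hdeg : P.natDegree ≤ n) (hP : ∀ i, P.eval (x i) = f (x i)) :
    ∃ ξ ∈ V, P.coeff n = iteratedDerivWithin n f U ξ / n.factorial := by
  have hPc : ContDiffOn ℝ n (fun t => P.eval t) U := (contDiff_polyEval P).contDiffOn
  have hgC : ContDiffOn ℝ n (f - fun t => P.eval t) U := hf.sub hPc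
  have hz : ∀ i, (f - fun t => P.eval t) (x i) = 0 := by
    intro i
    simp [sub_eq_zero, (hP i).symm]
  obtain ⟨ξ, hξV, h0⟩ := genRolle hU n V hV hVU _ hgC x hinj hxV hz
  rw [iteratedDerivWithin_sub (hVU hξV) (hU.uniqueDiffOn : UniqueDiffOn ℝ U) (hf ξ (hVU hξV)) (hPc ξ (hVU hξV))] at h0
  have hpoly : iteratedDerivWithin n (fun t => P.eval t) U ξ = (n.factorial : ℝ) * P.coeff n := by
    rw [iteratedDerivWithin_isOpen hU _ n ξ (hVU hξV), polyIteratedDeriv]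
    exact polyIterEval hdeg ξ
  rw [hpoly] at h0
  have hfac : (n.factorial : ℝ) ≠ 0 := Nat.cast_ne_zero.mpr n.factorial_ne_zero
  refine ⟨ξ, hξV, ?_⟩
  rw [eq_div_iff hfac]
  linarith

private lemma topCoeff {U : Set ℝ} (hU : IsOpen U) {b : ℝ} (hb : b ∈ U) {n : ℕ}
    {f : ℝ → ℝ} (hf : ContDiffOn ℝ n f U)
    (a : ℕ → Fin (n + 1) → ℝ) (hdist : ∀ s, Function.Injective (a s))
    (hconv : ∀ i, Tendsto (fun s : ℕ => a s i) atTop (nhds b))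
    (L : ℕ → Polynomial ℝ) (hdeg : ∀ s, (L s).natDegree ≤ n)
    (hinterp : ∀ s i, (L s).eval (a s i) = f (a s i)) :
    Tendsto (fun s => (L s).coeff n) atTop
      (nhds (iteratedDerivWithin n f U b / n.factorial)) := by
  have hud : UniqueDiffOn ℝ U := hU.uniqueDiffOn
  have hFcont : ContinuousOn (iteratedDerivWithin n f U) U :=
    hf.continuousOn_iteratedDerivWithin (m := n) le_rfl hud
  rw [Metric.tendsto_nhds]
  intro ε hε
  have hfac : (0 : ℝ) < n.factorial := Nat.cast_pos.mpr n.factorial_pos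
  obtain ⟨δ, hδ, hδ'⟩ :=
    Metric.continuousWithinAt_iff.mp (hFcont b hb) (ε * n.factorial) (by positivity)
  obtain ⟨r, hr, hrU⟩ := Metric.isOpen_iff.mp hU b hb
  have hρ : 0 < min δ r := lt_min hδ hr
  have hVU : Metric.ball b (min δ r) ⊆ U :=
    (Metric.ball_subset_ball (min_le_right _ _)).trans hrU
  have hev : ∀ᶠ s in atTop, ∀ i, a s i ∈ Metric.ball b (min δ r) :=
    eventually_all.mpr fun i => (hconv i) (Metric.ball_mem_nhds b hρ)
  filter_upwards [hev] with s hs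
  obtain ⟨ξ, hξV, hξeq⟩ := meanValue hU (convex_ball b (min δ r)).ordConnected hVU hf
    (hdist s) hs (hdeg s) (fun i => hinterp s i)
  rw [hξeq]
  have h1 : dist ξ b < δ := lt_of_lt_of_le (Metric.mem_ball.mp hξV) (min_le_left _ _)
  have h2 := hδ' (hVU hξV) h1
  rw [Real.dist_eq] at h2
  rw [Real.dist_eq, ← sub_div, abs_div, abs_of_pos hfac, div_lt_iff₀ hfac]
  exact h2

private lemma tendsto_coeff_mul {p q : ℕ → Polynomial ℝ} {P Q : Polynomial ℝ}
    (hp : ∀ k, Tendsto (fun s => (p s).coeff k) atTop (nhds (P.coeff k)))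
    (hq : ∀ k, Tendsto (fun s => (q s).coeff k) atTop (nhds (Q.coeff k))) :
    ∀ k, Tendsto (fun s => (p s * q s).coeff k) atTop (nhds ((P * Q).coeff k)) := by
  intro k
  simp only [Polynomial.coeff_mul]
  exact tendsto_finset_sum _ fun i _ => (hp i.1).mul (hq i.2)

private lemma tendsto_coeff_prod {ι : Type*} (t : Finset ι) (p : ℕ → ι → Polynomial ℝ)
    (q : ι → Polynomial ℝ)
    (h : ∀ i ∈ t, ∀ k, Tendsto (fun s => (p s i).coeff k) atTop (nhds ((q i).coeff k))) :
    ∀ k, Tendsto (fun s => (∏ i ∈ t, p s i).coeff k) atTop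
      (nhds ((∏ i ∈ t, q i).coeff k)) := by
  classical
  induction t using Finset.induction_on with
  | empty => intro k; simpa using tendsto_const_nhds
  | insert _ _ hnot ih =>
      intro k
      simp only [Finset.prod_insert hnot]
      exact tendsto_coeff_mul (h _ (Finset.mem_insert_self _ _))
        (ih fun i hi k => h i (Finset.mem_insert_of_mem hi) k) k

private lemma tendsto_coeff_XsubC {c : ℕ → ℝ} {b : ℝ} (h : Tendsto c atTop (nhds b)) (k : ℕ) :
    Tendsto (fun s => ((X : Polynomial ℝ) - Polynomial.C (c s)).coeff k) atTop
      (nhds (((X : Polynomial ℝ) - Polynomial.C b).coeff k)) := by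
  simp only [Polynomial.coeff_sub, Polynomial.coeff_C]
  rcases eq_or_ne k 0 with rfl | hk
  · simpa using h.neg
  · simpa [hk] using tendsto_const_nhds

private lemma mainAux {U : Set ℝ} (hU : IsOpen U) (f : ℝ → ℝ) {b : ℝ} (hb : b ∈ U) :
    ∀ n : ℕ, ContDiffOn ℝ n f U →
      ∀ a : ℕ → Fin (n + 1) → ℝ, (∀ s, Function.Injective (a s)) →
      (∀ i, Tendsto (fun s : ℕ => a s i) atTop (nhds b)) →
      ∀ L : ℕ → Polynomial ℝ, (∀ s, (L s).natDegree ≤ n) →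
      (∀ s i, (L s).eval (a s i) = f (a s i)) →
      ∀ k, Tendsto (fun s => (L s).coeff k) atTop
        (nhds ((∑ k' ∈ Finset.range (n + 1),
          Polynomial.C (iteratedDerivWithin k' f U b / (Nat.factorial k' : ℝ)) *
            (X - Polynomial.C b) ^ k').coeff k)) := by
  intro n
  induction n with
  | zero =>
      intro hf a hdist hconv L hdeg hinterp k
      have hT : (∑ k' ∈ Finset.range 1,
          Polynomial.C (iteratedDerivWithin k' f U b / (Nat.factorial k' : ℝ)) *
            (X - Polynomial.C b) ^ k') = Polynomial.C (f b) := by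
        simp [Finset.sum_range_one, iteratedDerivWithin_zero]
      rw [hT]
      rcases eq_or_ne k 0 with rfl | hk
      · have h := topCoeff hU hb hf a hdist hconv L hdeg hinterp
        simpa [iteratedDerivWithin_zero] using h
      · have hz : ∀ s, (L s).coeff k = 0 := fun s =>
          Polynomial.coeff_eq_zero_of_natDegree_lt
            (lt_of_le_of_lt (hdeg s) (Nat.pos_of_ne_zero hk))
        simp only [hz, Polynomial.coeff_C, if_neg hk]
        exact tendsto_const_nhds
  | succ n IH =>
      intro hf a hdist hconv L hdeg hinterp k
      obtain ⟨N, hN⟩ : ∃ N : ℕ → Polynomial ℝ,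
          ∀ s, N s = ∏ i : Fin (n + 1), (X - Polynomial.C (a s i.castSucc)) :=
        ⟨_, fun _ => rfl⟩
      obtain ⟨Q, hQ⟩ : ∃ Q : ℕ → Polynomial ℝ,
          ∀ s, Q s = L s - Polynomial.C ((L s).coeff (n + 1)) * N s :=
        ⟨_, fun _ => rfl⟩
      have hNdeg : ∀ s, (N s).natDegree = n + 1 := by
        intro s
        rw [hN s, natDegree_prod _ _ (fun i _ => X_sub_C_ne_zero _)]
        simp [natDegree_X_sub_C]
      have hN1 : ∀ s, (N s).coeff (n + 1) = 1 := by
        intro s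
        have hm : (N s).Monic := by
          rw [hN s]; exact monic_prod_of_monic _ _ fun i _ => monic_X_sub_C _
        have h := hm.coeff_natDegree
        rwa [hNdeg s] at h
      have hQdeg : ∀ s, (Q s).natDegree ≤ n := by
        intro s
        rw [natDegree_le_iff_coeff_eq_zero]
        intro m hm
        rw [hQ s]
        simp only [Polynomial.coeff_sub, Polynomial.coeff_C_mul]
        rcases eq_or_lt_of_le (Nat.succ_le_of_lt hm) with h | h
        · rw [← h, hN1 s, mul_one, sub_self]
        · have hLz : (L s).coeff m = 0 :=
            Polynomial.coeff_eq_zero_of_natDegree_lt (lt_of_le_of_lt (hdeg s) h)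
          have hNz : (N s).coeff m = 0 :=
            Polynomial.coeff_eq_zero_of_natDegree_lt (by rw [hNdeg s]; exact h)
          rw [hLz, hNz]
          ring
      have hQint : ∀ s (i : Fin (n + 1)), (Q s).eval (a s i.castSucc) = f (a s i.castSucc) := by
        intro s i
        have hNz : (N s).eval (a s i.castSucc) = 0 := by
          rw [hN s, Polynomial.eval_prod]
          exact Finset.prod_eq_zero (Finset.mem_univ i) (by simp)
        rw [hQ s]
        simp [hNz, hinterp s i.castSucc]
      have hf' : ContDiffOn ℝ n f U := hf.of_le (by exact_mod_cast Nat.le_succ n)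
      have hQt := IH hf' (fun s i => a s i.castSucc)
        (fun s => (hdist s).comp (Fin.castSucc_injective _))
        (fun i => hconv i.castSucc) Q hQdeg hQint k
      have hct := topCoeff hU hb hf a hdist hconv L hdeg hinterp
      have hNt : Tendsto (fun s => (N s).coeff k) atTop
          (nhds ((∏ _i : Fin (n + 1), ((X : Polynomial ℝ) - Polynomial.C b)).coeff k)) := by
        have h2 := tendsto_coeff_prod (ι := Fin (n + 1)) Finset.univ
          (fun s i => X - Polynomial.C (a s i.castSucc))
          (fun _ => X - Polynomial.C b)
          (fun i _ => tendsto_coeff_XsubC (c := fun s => a s i.castSucc) (b := b)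
            (hconv i.castSucc))
        simp only [hN]
        exact h2 k
      have hpow : ((X : Polynomial ℝ) - Polynomial.C b) ^ (n + 1) =
          ∏ _i : Fin (n + 1), ((X : Polynomial ℝ) - Polynomial.C b) := by
        simp [Finset.prod_const]
      rw [Finset.sum_range_succ, Polynomial.coeff_add, Polynomial.coeff_C_mul, hpow]
      have hcomb := hQt.add (hct.mul hNt)
      refine Tendsto.congr (fun s => ?_) hcomb
      rw [hQ s]
      simp only [Polynomial.coeff_sub, Polynomial.coeff_C_mul]
      ring

/-- Univariate continuity of Lagrange interpolation: if `d+1` distinct points converge to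
`b` and `f` is `C^d` on a neighborhood of `b`, the Lagrange interpolation polynomials
converge coefficientwise to the Taylor polynomial of `f` at `b` of order `d`. -/
theorem stmt_3 (d : ℕ) (b : ℝ) (U : Set ℝ) (hU : IsOpen U) (hb : b ∈ U)
    (f : ℝ → ℝ) (hf : ContDiffOn ℝ d f U)
    (a : ℕ → Fin (d + 1) → ℝ) (hdist : ∀ s, Function.Injective (a s))
    (hconv : ∀ i, Filter.Tendsto (fun s => a s i) Filter.atTop (nhds b))
    (L : ℕ → Polynomial ℝ) (hdeg : ∀ s, (L s).degree ≤ d)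
    (hinterp : ∀ s i, (L s).eval (a s i) = f (a s i)) :
    ∀ k, Filter.Tendsto (fun s => (L s).coeff k) Filter.atTop
      (nhds ((∑ k' ∈ Finset.range (d + 1),
        Polynomial.C (iteratedDerivWithin k' f U b / (Nat.factorial k' : ℝ)) *
          (Polynomial.X - Polynomial.C b) ^ k').coeff k)) := by
  exact mainAux hU f hb d hf a hdist hconv L
    (fun s => Polynomial.natDegree_le_iff_degree_le.mpr (hdeg s)) hinterp
end

section
/- Let ℍ = {ℓ_1,…,ℓ_d}, d ≥ N, be hyperplanes in general position in ℝ^N. The set 𝒱 = {n_K : K ∈ binom(ℍ, N−1)} is an interpolation lattice for the space ℋ^{d−N+1} of homogeneous polynomials of degree d − N + 1 in N variables: the homogeneous polynomials H_K(x) = ∏_{ℓ ∈ ℍ∖K} ℓ̃(x)/ℓ̃(n_K) satisfy H_K(n_K) = 1 and H_K(n_{K'}) = 0 for K' ≠ K, and every function on 𝒱 extends uniquely to an element of ℋ^{d−N+1}. -/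
open MvPolynomial Finset

noncomputable def aux_sym_equiv (N k : ℕ) :
    {x : Fin N →₀ ℕ // x ∈ {d : Fin N →₀ ℕ | d.degree = k}} ≃ Sym (Fin N) k where
  toFun x := ⟨Finsupp.toMultiset x.1, by
    rw [Finsupp.card_toMultiset]
    exact x.2⟩
  invFun s := ⟨Multiset.toFinsupp s.1, by
    have h : Finsupp.toMultiset (Multiset.toFinsupp s.1) = s.1 :=
      Multiset.toFinsupp_toMultiset s.1
    have h2 := congrArg Multiset.card h
    rw [Finsupp.card_toMultiset] at h2
    show Finsupp.degree _ = k
    rw [show Finsupp.degree (Multiset.toFinsupp s.1) = (Multiset.toFinsupp s.1).sum fun _ => id from rfl, h2]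
    exact s.2⟩
  left_inv x := by
    ext1
    classical
    exact Finsupp.toMultiset_toFinsupp x.1
  right_inv s := by
    ext1
    exact Multiset.toFinsupp_toMultiset s.1

lemma aux_finrank (N k : ℕ) :
    Module.finrank ℝ ↥(MvPolynomial.homogeneousSubmodule (Fin N) ℝ k)
      = Nat.multichoose N k := by
  classical
  haveI : Fintype {x : Fin N →₀ ℕ // x ∈ {d : Fin N →₀ ℕ | d.degree = k}} :=
    Fintype.ofEquiv _ (aux_sym_equiv N k).symm
  have he : MvPolynomial.homogeneousSubmodule (Fin N) ℝ k
      = MvPolynomial.restrictSupport ℝ {d : Fin N →₀ ℕ | d.degree = k} :=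
    MvPolynomial.homogeneousSubmodule_eq_finsupp_supported (Fin N) ℝ k
  rw [he]
  rw [Module.finrank_eq_card_basis
    (MvPolynomial.basisRestrictSupport ℝ {d : Fin N →₀ ℕ | d.degree = k})]
  rw [Fintype.card_congr (aux_sym_equiv N k), Sym.card_sym_eq_multichoose,
    Fintype.card_fin]

lemma aux_fd (N k : ℕ) :
    FiniteDimensional ℝ ↥(MvPolynomial.homogeneousSubmodule (Fin N) ℝ k) := by
  classical
  haveI : Fintype {x : Fin N →₀ ℕ // x ∈ {d : Fin N →₀ ℕ | d.degree = k}} :=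
    Fintype.ofEquiv _ (aux_sym_equiv N k).symm
  have he : MvPolynomial.homogeneousSubmodule (Fin N) ℝ k
      = MvPolynomial.restrictSupport ℝ {d : Fin N →₀ ℕ | d.degree = k} :=
    MvPolynomial.homogeneousSubmodule_eq_finsupp_supported (Fin N) ℝ k
  rw [he]
  exact Module.Finite.of_basis
    (MvPolynomial.basisRestrictSupport ℝ {d : Fin N →₀ ℕ | d.degree = k})

/-- The set `𝒱 = {ν K : K ∈ binom(ℍ, N-1)}` is an interpolation lattice for the space of
homogeneous polynomials of degree `d - N + 1` (`N = m+1`): the homogeneous products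
`H_K(x) = ∏_{ℓ ∉ K} ℓ̃(x)/ℓ̃(ν K)` satisfy `H_K(ν K) = 1`, `H_K(ν K') = 0` for `K' ≠ K`,
and every function on `𝒱` extends uniquely to a homogeneous polynomial of that degree. -/
theorem stmt_8 (m d : ℕ) (hd : m + 1 ≤ d)
    (n : Fin d → EuclideanSpace ℝ (Fin (m + 1))) (hn : ∀ i, ‖n i‖ = 1)
    (hgp : ∀ g : Fin (m + 1) → Fin d, StrictMono g →
      Matrix.det (Matrix.of fun i j => n (g i) j) ≠ 0)
    (ν : Finset (Fin d) → EuclideanSpace ℝ (Fin (m + 1)))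
    (hν : ∀ (K : Finset (Fin d)) (hK : K.card = m)
        (w : EuclideanSpace ℝ (Fin (m + 1))),
      Matrix.det (Matrix.of (Fin.cons (fun j => w j)
        (fun k j => n (K.orderIsoOfFin hK k) j))) = (inner ℝ w (ν K) : ℝ)) :
    (∀ K : Finset (Fin d), K.card = m →
        (∏ i ∈ Kᶜ, (inner ℝ (n i) (ν K) : ℝ) / (inner ℝ (n i) (ν K) : ℝ)) = 1) ∧
    (∀ K K' : Finset (Fin d), K.card = m → K'.card = m → K' ≠ K →
        (∏ i ∈ Kᶜ, (inner ℝ (n i) (ν K') : ℝ) / (inner ℝ (n i) (ν K) : ℝ)) = 0) ∧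
    ∀ f : EuclideanSpace ℝ (Fin (m + 1)) → ℝ,
      ∃! P : MvPolynomial (Fin (m + 1)) ℝ,
        P ∈ MvPolynomial.homogeneousSubmodule (Fin (m + 1)) ℝ (d - m) ∧
        ∀ K : Finset (Fin d), K.card = m →
          MvPolynomial.eval (fun j => ν K j) P = f (ν K) := by
  classical
  -- the inner product with `ν K'` vanishes on normals from `K'`
  have hzero : ∀ (K' : Finset (Fin d)) (hK' : K'.card = m), ∀ i ∈ K',
      (inner ℝ (n i) (ν K') : ℝ) = 0 := by
    intro K' hK' i hi
    rw [← hν K' hK' (n i)]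
    set k : Fin m := (K'.orderIsoOfFin hK').symm ⟨i, hi⟩ with hkdef
    have hk2 : K'.orderEmbOfFin hK' k = i := by
      rw [← Finset.coe_orderIsoOfFin_apply, hkdef, OrderIso.apply_symm_apply]
    refine Matrix.det_zero_of_row_eq (i := (0 : Fin (m + 1))) (j := k.succ)
      (Fin.succ_ne_zero k).symm ?_
    funext j
    simp [hk2]
  -- the inner product with `ν K` is nonzero on normals outside `K`
  have hne : ∀ (K : Finset (Fin d)) (hK : K.card = m), ∀ i ∉ K,
      (inner ℝ (n i) (ν K) : ℝ) ≠ 0 := by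
    intro K hK i hi
    rw [← hν K hK (n i)]
    set L : Finset (Fin d) := insert i K with hLdef
    have hLc : L.card = m + 1 := by
      rw [hLdef, Finset.card_insert_of_notMem hi, hK]
    set g : Fin (m + 1) → Fin d := fun p => L.orderEmbOfFin hLc p with hgdef
    have hdetA : Matrix.det (Matrix.of fun p j => n (g p) j) ≠ 0 :=
      hgp g (L.orderEmbOfFin hLc).strictMono
    set h : Fin (m + 1) → Fin d :=
      Fin.cons i (fun q => K.orderEmbOfFin hK q) with hhdef
    have hmem : ∀ p, h p ∈ L := by
      intro p
      refine Fin.cases ?_ ?_ p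
      · simp [hhdef, hLdef]
      · intro q
        simp only [hhdef, Fin.cons_succ, hLdef]
        exact Finset.mem_insert_of_mem (Finset.orderEmbOfFin_mem _ _ _)
    have hinj : Function.Injective h := by
      rw [hhdef, Fin.cons_injective_iff]
      refine ⟨?_, (K.orderEmbOfFin hK).injective⟩
      rintro ⟨q, hq⟩
      apply hi
      have hq' : K.orderEmbOfFin hK q = i := hq
      rw [← hq']
      exact Finset.orderEmbOfFin_mem _ _ _
    set σf : Fin (m + 1) → Fin (m + 1) :=
      fun p => (L.orderIsoOfFin hLc).symm ⟨h p, hmem p⟩ with hσdef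
    have hσinj : Function.Injective σf := by
      intro a b hab
      apply hinj
      have h2 := congrArg (fun z => ((L.orderIsoOfFin hLc) z : Fin d)) hab
      simpa [hσdef] using h2
    set e : Equiv.Perm (Fin (m + 1)) :=
      Equiv.ofBijective σf (Finite.injective_iff_bijective.mp hσinj) with hedef
    have hM : (Matrix.of (Fin.cons (fun j => (n i) j)
        (fun k j => n (K.orderIsoOfFin hK k) j)))
        = (Matrix.of fun p j => n (g p) j).submatrix e id := by
      funext p j
      have hge : g (e p) = h p := by
        show (L.orderEmbOfFin hLc) (σf p) = h p
        rw [← Finset.coe_orderIsoOfFin_apply]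
        simp [hσdef]
      simp only [Matrix.of_apply, Matrix.submatrix_apply, id_eq, hge]
      refine Fin.cases ?_ ?_ p
      · simp [hhdef]
      · intro q
        simp [hhdef, Finset.coe_orderIsoOfFin_apply]
    rw [hM, Matrix.det_permute]
    refine mul_ne_zero ?_ hdetA
    rcases Int.units_eq_one_or (Equiv.Perm.sign e) with hs | hs <;> simp [hs]
  refine ⟨?_, ?_, ?_⟩
  · -- H_K(ν K) = 1
    intro K hK
    refine Finset.prod_eq_one fun i hi => ?_
    exact div_self (hne K hK i (Finset.mem_compl.mp hi))
  · -- H_K(ν K') = 0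
    intro K K' hK hK' hKK'
    have hsub : ¬ K' ⊆ K := fun hs =>
      hKK' (Finset.eq_of_subset_of_card_le hs (by rw [hK, hK']))
    obtain ⟨i, hiK', hiK⟩ := Finset.not_subset.mp hsub
    refine Finset.prod_eq_zero (Finset.mem_compl.mpr hiK) ?_
    rw [hzero K' hK' i hiK', zero_div]
  · -- interpolation
    set Pm : Finset (Fin d) → MvPolynomial (Fin (m + 1)) ℝ :=
      fun K => ∏ i ∈ Kᶜ, (∑ j, MvPolynomial.C (n i j) * MvPolynomial.X j) with hPmdef
    have hPhom : ∀ K : Finset (Fin d), K.card = m →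
        Pm K ∈ MvPolynomial.homogeneousSubmodule (Fin (m + 1)) ℝ (d - m) := by
      intro K hK
      rw [MvPolynomial.mem_homogeneousSubmodule]
      have hcompl : Kᶜ.card = d - m := by
        rw [Finset.card_compl, hK, Fintype.card_fin]
      have hp := MvPolynomial.IsHomogeneous.prod Kᶜ
        (fun i => ∑ j, MvPolynomial.C (n i j) * MvPolynomial.X j) (fun _ => 1)
        (fun i _ => MvPolynomial.IsHomogeneous.sum _ _ _
          (fun j _ => MvPolynomial.isHomogeneous_C_mul_X _ _))
      simpa [Finset.sum_const, hcompl] using hp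
    have hinner : ∀ (i : Fin d) (x : EuclideanSpace ℝ (Fin (m + 1))),
        (inner ℝ (n i) x : ℝ) = ∑ j, n i j * x j := by
      intro i x
      simp [PiLp.inner_apply, RCLike.inner_apply, conj_trivial, mul_comm]
    have hPeval : ∀ (K : Finset (Fin d)) (x : EuclideanSpace ℝ (Fin (m + 1))),
        MvPolynomial.eval (fun j => x j) (Pm K) = ∏ i ∈ Kᶜ, (inner ℝ (n i) x : ℝ) := by
      intro K x
      rw [hPmdef, map_prod]
      refine Finset.prod_congr rfl fun i _ => ?_
      rw [hinner]
      simp [map_sum]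
    have hdelta : ∀ K K' : Finset (Fin d), K.card = m → K'.card = m → K ≠ K' →
        MvPolynomial.eval (fun j => ν K' j) (Pm K) = 0 := by
      intro K K' hK hK' hKK'
      rw [hPeval]
      have hsub : ¬ K' ⊆ K := fun hs =>
        hKK' (Finset.eq_of_subset_of_card_le hs (by rw [hK, hK'])).symm
      obtain ⟨i, hiK', hiK⟩ := Finset.not_subset.mp hsub
      exact Finset.prod_eq_zero (Finset.mem_compl.mpr hiK) (hzero K' hK' i hiK')
    set c : Finset (Fin d) → ℝ :=
      fun K => ∏ i ∈ Kᶜ, (inner ℝ (n i) (ν K) : ℝ) with hcdef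
    have hc : ∀ K : Finset (Fin d), K.card = m → c K ≠ 0 := fun K hK =>
      Finset.prod_ne_zero_iff.mpr fun i hi => hne K hK i (Finset.mem_compl.mp hi)
    set E : ↥(MvPolynomial.homogeneousSubmodule (Fin (m + 1)) ℝ (d - m)) →ₗ[ℝ]
        ({K : Finset (Fin d) // K.card = m} → ℝ) :=
      { toFun := fun P s => MvPolynomial.eval (fun j => ν s.1 j) P.1
        map_add' := fun P Q => by funext s; simp
        map_smul' := fun r P => by funext s; simp [MvPolynomial.smul_eval] } with hEdef
    have hsurj : Function.Surjective E := by
      intro v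
      refine ⟨⟨∑ s : {K : Finset (Fin d) // K.card = m}, (v s / c s.1) • Pm s.1,
        Submodule.sum_mem _ fun s _ => Submodule.smul_mem _ _ (hPhom s.1 s.2)⟩, ?_⟩
      funext s₀
      show MvPolynomial.eval (fun j => ν s₀.1 j) (∑ s, (v s / c s.1) • Pm s.1) = v s₀
      rw [map_sum, Finset.sum_eq_single s₀]
      · rw [MvPolynomial.smul_eval, hPeval]
        exact div_mul_cancel₀ _ (hc s₀.1 s₀.2)
      · intro s _ hs
        rw [MvPolynomial.smul_eval,
          hdelta s.1 s₀.1 s.2 s₀.2 (fun hh => hs (Subtype.ext hh)), mul_zero]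
      · intro hmem
        exact absurd (Finset.mem_univ s₀) hmem
    haveI : FiniteDimensional ℝ
        ↥(MvPolynomial.homogeneousSubmodule (Fin (m + 1)) ℝ (d - m)) :=
      aux_fd (m + 1) (d - m)
    have hrk : Module.finrank ℝ
          ↥(MvPolynomial.homogeneousSubmodule (Fin (m + 1)) ℝ (d - m))
        = Module.finrank ℝ ({K : Finset (Fin d) // K.card = m} → ℝ) := by
      rw [aux_finrank, Module.finrank_fintype_fun_eq_card, Nat.multichoose_eq]
      have h1 : m + 1 + (d - m) - 1 = d := by omega
      rw [h1, Nat.choose_symm (by omega : m ≤ d)]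
      rw [Fintype.card_subtype]
      have h3 : (Finset.univ.filter fun K : Finset (Fin d) => K.card = m)
          = Finset.powersetCard m Finset.univ := by
        rw [Finset.powersetCard_eq_filter, Finset.powerset_univ]
      rw [h3, Finset.card_powersetCard, Finset.card_univ, Fintype.card_fin]
    have hinjE : Function.Injective E :=
      (LinearMap.injective_iff_surjective_of_finrank_eq_finrank hrk).mpr hsurj
    intro f
    obtain ⟨P₀, hP₀⟩ := hsurj fun s => f (ν s.1)
    refine ⟨P₀.1, ⟨P₀.2, fun K hK => ?_⟩, ?_⟩
    · exact congrFun hP₀ ⟨K, hK⟩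
    · rintro Q ⟨hQmem, hQeval⟩
      have hEQ : E ⟨Q, hQmem⟩ = E P₀ := by
        funext s
        show MvPolynomial.eval (fun j => ν s.1 j) Q = _
        rw [hQeval s.1 s.2]
        exact (congrFun hP₀ s).symm
      exact congrArg Subtype.val (hinjE hEQ)
end

section
/- Let ℍ = {ℓ_1,…,ℓ_d}, d ≥ N, be hyperplanes in general position in ℝ^N. For every symmetric (d−N+1)-linear form φ on ℝ^N and every v ∈ ℝ^N: φ(v,…,v) = Σ_{K ∈ binom(ℍ, N−1)} [∏_{ℓ ∈ ℍ∖K} ℓ̃(v)/ℓ̃(n_K)] · φ(n_K,…,n_K). -/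
open Finset in
/-- The diagonal of a `k`-linear map on `ℝ^{m+1}` lies in the span of the product functions
`x ↦ ∏_{i ∈ Kᶜ} ⟨n i, x⟩` over the `m`-element subsets `K`, provided every `m+1` of the
vectors `n i` span. -/
theorem chungYao_span (m : ℕ) : ∀ (k : ℕ) (n : Fin (m + k) → EuclideanSpace ℝ (Fin (m + 1)))
    (_ : ∀ j : Fin (m + 1) → Fin (m + k), Function.Injective j →
      Submodule.span ℝ (Set.range fun t => n (j t)) = ⊤)
    (φ : MultilinearMap ℝ (fun _ : Fin k => EuclideanSpace ℝ (Fin (m + 1))) ℝ),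
    (fun x => φ fun _ => x) ∈ Submodule.span ℝ
      (Set.range fun K : Finset.powersetCard m (Finset.univ : Finset (Fin (m + k))) =>
        fun x : EuclideanSpace ℝ (Fin (m + 1)) =>
          ∏ i ∈ (↑K : Finset (Fin (m + k)))ᶜ, (inner ℝ (n i) x : ℝ)) := by
  intro k
  induction k with
  | zero =>
    intro n hspan φ
    have hU : (univ : Finset (Fin (m + 0))) ∈ powersetCard m (univ : Finset (Fin (m + 0))) := by
      simp [Finset.mem_powersetCard_univ]
    have hEq : (fun x => φ fun _ => x) =
        φ (fun _ => 0) • (fun x : EuclideanSpace ℝ (Fin (m + 1)) =>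
          ∏ i ∈ (univ : Finset (Fin (m + 0)))ᶜ, (inner ℝ (n i) x : ℝ)) := by
      funext x
      simp only [Finset.compl_univ, Finset.prod_empty, Pi.smul_apply, smul_eq_mul, mul_one]
      exact congrArg φ (Subsingleton.elim _ _)
    rw [hEq]
    exact Submodule.smul_mem _ _ (Submodule.subset_span ⟨⟨univ, hU⟩, rfl⟩)
  | succ k IH =>
    intro n hspan φ
    classical
    have hspan' : ∀ j : Fin (m + 1) → Fin (m + k), Function.Injective j →
        Submodule.span ℝ (Set.range fun t => n (j t).castSucc) = ⊤ := by
      intro j hj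
      exact hspan (fun t => (j t).castSucc) ((Fin.castSucc_injective _).comp hj)
    have key : ∀ x : EuclideanSpace ℝ (Fin (m + 1)), φ (fun _ => x) =
        ∑ j : Fin (m + 1), x j * φ.curryRight (fun _ => x) (EuclideanSpace.single j 1) := by
      intro x
      have h2 : x = ∑ j : Fin (m + 1), x j • EuclideanSpace.single j 1 := by
        have := (EuclideanSpace.basisFun (Fin (m + 1)) ℝ).sum_repr x
        simp only [EuclideanSpace.basisFun_apply, EuclideanSpace.basisFun_repr] at this
        exact this.symm
      calc φ (fun _ => x) = φ.curryRight (fun _ : Fin k => x) x := by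
            rw [MultilinearMap.curryRight_apply]
            congr 1
            funext t
            cases t using Fin.lastCases with
            | last => simp
            | cast t => simp
        _ = φ.curryRight (fun _ : Fin k => x)
              (∑ j : Fin (m + 1), x j • EuclideanSpace.single j 1) := by rw [← h2]
        _ = ∑ j : Fin (m + 1), x j * φ.curryRight (fun _ => x) (EuclideanSpace.single j 1) := by
            rw [map_sum]
            simp only [map_smul, smul_eq_mul]
    have hmain : (fun x => φ fun _ => x) = ∑ j : Fin (m + 1),
        (fun x : EuclideanSpace ℝ (Fin (m + 1)) =>
          x j * φ.curryRight (fun _ => x) (EuclideanSpace.single j 1)) := by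
      funext x
      rw [key x]
      simp [Finset.sum_apply]
    rw [hmain]
    apply Submodule.sum_mem
    intro j _
    let Mj : (EuclideanSpace ℝ (Fin (m + 1)) → ℝ) →ₗ[ℝ] (EuclideanSpace ℝ (Fin (m + 1)) → ℝ) :=
      { toFun := fun f x => x j * f x
        map_add' := by intro f g; funext x; simp [mul_add]
        map_smul' := by intro c f; funext x; simp [smul_eq_mul]; ring }
    let μ : MultilinearMap ℝ (fun _ : Fin k => EuclideanSpace ℝ (Fin (m + 1))) ℝ :=
      (LinearMap.applyₗ (EuclideanSpace.single j (1:ℝ))).compMultilinearMap φ.curryRight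
    have hμ : (fun x : EuclideanSpace ℝ (Fin (m + 1)) =>
        x j * φ.curryRight (fun _ => x) (EuclideanSpace.single j 1))
        = Mj (fun x => μ fun _ => x) := rfl
    rw [hμ]
    have hIH := IH (fun i => n i.castSucc) hspan' μ
    have hmap := Submodule.mem_map_of_mem (f := Mj) hIH
    rw [Submodule.map_span] at hmap
    refine Submodule.span_le.mpr ?_ hmap
    rintro f ⟨g, ⟨K, rfl⟩, rfl⟩
    obtain ⟨Kf, hKmem⟩ := K
    have hK : Kf.card = m := Finset.mem_powersetCard_univ.mp hKmem
    show Mj (fun x => ∏ i ∈ Kfᶜ, (inner ℝ (n i.castSucc) x : ℝ)) ∈ _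
    set enum := Kf.orderIsoOfFin hK with henum
    set jfun : Fin (m + 1) → Fin (m + (k+1)) :=
      Fin.snoc (fun t => ((enum t : Fin (m+k))).castSucc) (Fin.last (m+k)) with hjfun
    have hjinj : Function.Injective jfun := by
      intro a b hab
      cases a using Fin.lastCases with
      | last =>
        cases b using Fin.lastCases with
        | last => rfl
        | cast b =>
          rw [hjfun] at hab
          simp only [Fin.snoc_last, Fin.snoc_castSucc] at hab
          exact absurd hab.symm (Fin.castSucc_lt_last _).ne
      | cast a =>
        cases b using Fin.lastCases with
        | last =>
          rw [hjfun] at hab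
          simp only [Fin.snoc_last, Fin.snoc_castSucc] at hab
          exact absurd hab (Fin.castSucc_lt_last _).ne
        | cast b =>
          rw [hjfun] at hab
          simp only [Fin.snoc_castSucc] at hab
          have := Fin.castSucc_injective _ hab
          have h2 : enum a = enum b := Subtype.coe_injective this
          exact congrArg Fin.castSucc (enum.injective h2)
    have hsp := hspan jfun hjinj
    have hmem : EuclideanSpace.single j (1:ℝ) ∈
        Submodule.span ℝ (Set.range fun t => n (jfun t)) := by
      rw [hsp]; trivial
    obtain ⟨a, ha⟩ := (Submodule.mem_span_range_iff_exists_fun ℝ).mp hmem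
    have coord : ∀ x : EuclideanSpace ℝ (Fin (m + 1)),
        x j = ∑ t : Fin (m+1), a t * (inner ℝ (n (jfun t)) x : ℝ) := by
      intro x
      have h1 : (inner ℝ (EuclideanSpace.single j (1:ℝ)) x : ℝ) = x j := by
        simp [EuclideanSpace.inner_single_left]
      rw [← h1, ← ha, sum_inner]
      simp [real_inner_smul_left, Finset.mul_sum, mul_assoc]
    set B : Fin (m+1) → Finset (Fin (m + (k+1))) :=
      fun t => insert (jfun t) ((Kfᶜ).map Fin.castSuccEmb) with hB
    have hno : ∀ t, jfun t ∉ (Kfᶜ).map Fin.castSuccEmb := by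
      intro t ht
      rw [Finset.mem_map] at ht
      obtain ⟨y, hy, hyt⟩ := ht
      cases t using Fin.lastCases with
      | last =>
        rw [hjfun] at hyt
        simp only [Fin.snoc_last] at hyt
        exact absurd hyt ((Fin.castSucc_lt_last y).ne)
      | cast t =>
        rw [hjfun] at hyt
        simp only [Fin.snoc_castSucc] at hyt
        have : y = (enum t : Fin (m+k)) := Fin.castSucc_injective _ hyt
        rw [this] at hy
        rw [Finset.mem_compl] at hy
        exact hy (enum t).2
    have hBcard : ∀ t, (B t).card = k + 1 := by
      intro t
      rw [hB]
      rw [Finset.card_insert_of_notMem (hno t), Finset.card_map, Finset.card_compl, hK]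
      simp
    have hmemP : ∀ t, (B t)ᶜ ∈ Finset.powersetCard m (Finset.univ : Finset (Fin (m + (k+1)))) := by
      intro t
      rw [Finset.mem_powersetCard_univ, Finset.card_compl, hBcard t]
      simp
    have hGval : ∀ t x, (∏ i ∈ ((B t)ᶜ)ᶜ, (inner ℝ (n i) x : ℝ)) =
        (inner ℝ (n (jfun t)) x : ℝ) * ∏ i ∈ Kfᶜ, (inner ℝ (n i.castSucc) x : ℝ) := by
      intro t x
      rw [compl_compl, hB, Finset.prod_insert (hno t), Finset.prod_map]
      rfl
    have hMG : Mj (fun x => ∏ i ∈ Kfᶜ, (inner ℝ (n i.castSucc) x : ℝ)) =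
        ∑ t : Fin (m+1), a t • (fun x : EuclideanSpace ℝ (Fin (m + 1)) =>
          ∏ i ∈ ((B t)ᶜ : Finset (Fin (m + (k+1))))ᶜ, (inner ℝ (n i) x : ℝ)) := by
      funext x
      rw [Finset.sum_apply]
      show x j * _ = _
      rw [coord x, Finset.sum_mul]
      refine Finset.sum_congr rfl fun t _ => ?_
      rw [Pi.smul_apply, smul_eq_mul, hGval t x]
      ring
    rw [hMG]
    exact Submodule.sum_mem _ fun t _ =>
      Submodule.smul_mem _ _ (Submodule.subset_span ⟨⟨(B t)ᶜ, hmemP t⟩, rfl⟩)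

open Finset in
lemma chungYao_reindex_sum {a b : ℕ} (e : Fin a ≃ Fin b) (m : ℕ) (F : Finset (Fin b) → ℝ) :
    ∑ K ∈ Finset.powersetCard m (Finset.univ : Finset (Fin b)), F K
      = ∑ K ∈ Finset.powersetCard m (Finset.univ : Finset (Fin a)),
          F (K.map e.toEmbedding) := by
  classical
  refine Finset.sum_nbij' (fun K => K.map e.symm.toEmbedding) (fun K => K.map e.toEmbedding)
    ?_ ?_ ?_ ?_ ?_
  · intro K hK
    rw [Finset.mem_powersetCard_univ] at hK ⊢
    rw [Finset.card_map, hK]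
  · intro K hK
    rw [Finset.mem_powersetCard_univ] at hK ⊢
    rw [Finset.card_map, hK]
  · intro K _
    ext x
    simp [Finset.mem_map_equiv]
  · intro K _
    ext x
    simp [Finset.mem_map_equiv]
  · intro K _
    congr 1
    ext x
    simp [Finset.mem_map_equiv]

/-- Representation of symmetric `(d-N+1)`-linear forms (`N = m+1`): for hyperplanes in
general position, `φ(v, …, v) = ∑_K (∏_{ℓ ∉ K} ℓ̃(v)/ℓ̃(ν K)) · φ(ν K, …, ν K)`. -/
theorem stmt_9 (m d : ℕ) (hd : m + 1 ≤ d)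
    (n : Fin d → EuclideanSpace ℝ (Fin (m + 1))) (hn : ∀ i, ‖n i‖ = 1)
    (hgp : ∀ g : Fin (m + 1) → Fin d, StrictMono g →
      Matrix.det (Matrix.of fun i j => n (g i) j) ≠ 0)
    (ν : Finset (Fin d) → EuclideanSpace ℝ (Fin (m + 1)))
    (hν : ∀ (K : Finset (Fin d)) (hK : K.card = m)
        (w : EuclideanSpace ℝ (Fin (m + 1))),
      Matrix.det (Matrix.of (Fin.cons (fun j => w j)
        (fun k j => n (K.orderIsoOfFin hK k) j))) = (inner ℝ w (ν K) : ℝ))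
    (φ : MultilinearMap ℝ (fun _ : Fin (d - m) => EuclideanSpace ℝ (Fin (m + 1))) ℝ)
    (hφ : ∀ (σ : Equiv.Perm (Fin (d - m))) (z : Fin (d - m) → EuclideanSpace ℝ (Fin (m + 1))),
      φ (z ∘ σ) = φ z)
    (v : EuclideanSpace ℝ (Fin (m + 1))) :
    φ (fun _ => v) =
      ∑ K ∈ Finset.powersetCard m (Finset.univ : Finset (Fin d)),
        (∏ i ∈ Kᶜ, (inner ℝ (n i) v : ℝ) / (inner ℝ (n i) (ν K) : ℝ)) *
          φ (fun _ => ν K) := by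
  classical
  -- Step 0: linear independence of injective (m+1)-subfamilies
  have hli : ∀ jf : Fin (m + 1) → Fin d, Function.Injective jf →
      LinearIndependent ℝ (fun t => n (jf t)) := by
    intro jf hjf
    set T : Finset (Fin d) := Finset.image jf Finset.univ with hT
    have hTcard : T.card = m + 1 := by
      rw [hT, Finset.card_image_of_injective _ hjf, Finset.card_univ, Fintype.card_fin]
    set g := T.orderIsoOfFin hTcard with hg
    have hgs : StrictMono fun t => ((g t : T) : Fin d) := by
      intro a b hab
      exact Subtype.coe_lt_coe.mpr (g.lt_iff_lt.mpr hab)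
    have hdet := hgp _ hgs
    have hli0 : LinearIndependent ℝ (fun t => n ((g t : T) : Fin d)) := by
      have : IsUnit (Matrix.of fun i jj => n ((g i : T) : Fin d) jj) :=
        (Matrix.isUnit_iff_isUnit_det _).mpr (isUnit_iff_ne_zero.mpr hdet)
      exact (Matrix.linearIndependent_rows_iff_isUnit.mpr this).map'
        (WithLp.linearEquiv 2 ℝ _).symm.toLinearMap (LinearEquiv.ker _)
    have hmemT : ∀ t, jf t ∈ T := fun t => Finset.mem_image_of_mem jf (Finset.mem_univ t)
    have heq : (fun t => n (jf t))
        = (fun t => n ((g t : T) : Fin d)) ∘ (fun t => g.symm ⟨jf t, hmemT t⟩) := by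
      funext t
      simp
    rw [heq]
    refine hli0.comp _ ?_
    intro a b hab
    have h1 : (⟨jf a, hmemT a⟩ : T) = ⟨jf b, hmemT b⟩ := g.symm.injective hab
    exact hjf (congrArg Subtype.val h1)
  have hspanTop : ∀ jf : Fin (m + 1) → Fin d, Function.Injective jf →
      Submodule.span ℝ (Set.range fun t => n (jf t)) = ⊤ := by
    intro jf hjf
    refine (hli jf hjf).span_eq_top_of_card_eq_finrank ?_
    simp [finrank_euclideanSpace_fin]
  -- Step 1: nonvanishing of ⟨n i, ν K⟩ for i ∉ K
  have hinner_ne : ∀ (K : Finset (Fin d)) (hK : K.card = m), ∀ i ∉ K,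
      (inner ℝ (n i) (ν K) : ℝ) ≠ 0 := by
    intro K hK i hi
    rw [← hν K hK (n i)]
    set jf : Fin (m+1) → Fin d :=
      Fin.cons i (fun t => (K.orderIsoOfFin hK t : Fin d)) with hjf
    have hjinj : Function.Injective jf := by
      rw [hjf, Fin.cons_injective_iff]
      constructor
      · rintro ⟨t, ht⟩
        exact hi (ht ▸ (K.orderIsoOfFin hK t).2)
      · intro a b hab
        exact (K.orderIsoOfFin hK).injective (Subtype.coe_injective hab)
    have hli2 := hli jf hjinj
    have hM : (Matrix.of (Fin.cons (fun jj => n i jj)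
        (fun t jj => n (K.orderIsoOfFin hK t) jj)))
        = Matrix.of (fun t jj => n (jf t) jj) := by
      funext t jj
      cases t using Fin.cases with
      | zero => rfl
      | succ t => rfl
    rw [hM]
    have hU : IsUnit (Matrix.of fun t jj => n (jf t) jj) :=
      Matrix.linearIndependent_rows_iff_isUnit.mp
        (hli2.map' (WithLp.linearEquiv 2 ℝ _).toLinearMap (LinearEquiv.ker _))
    exact isUnit_iff_ne_zero.mp ((Matrix.isUnit_iff_isUnit_det _).mp hU)
  -- Step 2: vanishing of ⟨n i, ν K⟩ for i ∈ K
  have hinner_zero : ∀ (K : Finset (Fin d)) (hK : K.card = m), ∀ i ∈ K,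
      (inner ℝ (n i) (ν K) : ℝ) = 0 := by
    intro K hK i hi
    rw [← hν K hK (n i)]
    set t0 := (K.orderIsoOfFin hK).symm ⟨i, hi⟩ with ht0
    refine Matrix.det_zero_of_row_eq (Fin.succ_ne_zero t0).symm ?_
    show (Fin.cons (fun jj => n i jj) (fun t jj => n (K.orderIsoOfFin hK t) jj)
        : Fin (m + 1) → Fin (m + 1) → ℝ) 0
      = (Fin.cons (fun jj => n i jj) (fun t jj => n (K.orderIsoOfFin hK t) jj)
        : Fin (m + 1) → Fin (m + 1) → ℝ) t0.succ
    rw [Fin.cons_zero, Fin.cons_succ]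
    have hti : ((K.orderIsoOfFin hK t0 : Fin d)) = i := by
      rw [ht0, OrderIso.apply_symm_apply]
    rw [hti]
  -- Step 3: representation of the diagonal of φ
  have hmk : m + (d - m) = d := by omega
  let e : Fin (m + (d - m)) ≃ Fin d := finCongr hmk
  have hspanN : ∀ jf : Fin (m + 1) → Fin (m + (d - m)), Function.Injective jf →
      Submodule.span ℝ (Set.range fun t => n (e (jf t))) = ⊤ :=
    fun jf hjf => hspanTop (fun t => e (jf t)) (e.injective.comp hjf)
  have hmem := chungYao_span m (d - m) (fun i => n (e i)) hspanN φ
  obtain ⟨c, hc⟩ := (Submodule.mem_span_range_iff_exists_fun ℝ).mp hmem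
  set C : Finset (Fin d) → ℝ := fun K =>
    if h : K.map e.symm.toEmbedding ∈
        Finset.powersetCard m (Finset.univ : Finset (Fin (m + (d - m)))) then
      c ⟨K.map e.symm.toEmbedding, h⟩ else 0 with hC
  have hmapsymm : ∀ K : Finset (Fin (m + (d - m))),
      (K.map e.toEmbedding).map e.symm.toEmbedding = K := by
    intro K
    ext x
    simp [Finset.mem_map_equiv]
  have hrep : ∀ x : EuclideanSpace ℝ (Fin (m + 1)), φ (fun _ => x) =
      ∑ K ∈ Finset.powersetCard m (Finset.univ : Finset (Fin d)),
        C K * ∏ i ∈ Kᶜ, (inner ℝ (n i) x : ℝ) := by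
    intro x
    rw [chungYao_reindex_sum e m (fun K => C K * ∏ i ∈ Kᶜ, (inner ℝ (n i) x : ℝ))]
    have h1 : ∀ K ∈ Finset.powersetCard m (Finset.univ : Finset (Fin (m + (d - m)))),
        C (K.map e.toEmbedding) * ∏ i ∈ (K.map e.toEmbedding)ᶜ, (inner ℝ (n i) x : ℝ)
          = (if h : K ∈ Finset.powersetCard m (Finset.univ : Finset (Fin (m + (d - m)))) then
              c ⟨K, h⟩ else 0) * ∏ i ∈ Kᶜ, (inner ℝ (n (e i)) x : ℝ) := by
      intro K hKm
      have hcompl : (K.map e.toEmbedding)ᶜ = Kᶜ.map e.toEmbedding := by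
        ext y
        simp [Finset.mem_map_equiv]
      rw [hC]
      simp only [hmapsymm K]
      rw [hcompl, Finset.prod_map]
      rfl
    rw [Finset.sum_congr rfl h1]
    have h2 := congrFun hc x
    simp only [Finset.sum_apply, Pi.smul_apply, smul_eq_mul] at h2
    rw [← h2]
    rw [← Finset.sum_coe_sort (Finset.powersetCard m
      (Finset.univ : Finset (Fin (m + (d - m)))))]
    refine Finset.sum_congr rfl fun K _ => ?_
    rw [dif_pos K.2]
  -- Step 4: final computation
  rw [hrep v]
  refine Finset.sum_congr rfl fun K hKm => ?_
  have hK : K.card = m := Finset.mem_powersetCard_univ.mp hKm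
  rw [hrep (ν K)]
  have hsingle : (∑ J ∈ Finset.powersetCard m (Finset.univ : Finset (Fin d)),
      C J * ∏ i ∈ Jᶜ, (inner ℝ (n i) (ν K) : ℝ))
      = C K * ∏ i ∈ Kᶜ, (inner ℝ (n i) (ν K) : ℝ) := by
    refine Finset.sum_eq_single_of_mem K hKm fun J hJm hJK => ?_
    have hJ : J.card = m := Finset.mem_powersetCard_univ.mp hJm
    have hnsub : ¬ K ⊆ J := by
      intro hsub
      exact hJK (Finset.eq_of_subset_of_card_le hsub (hJ.trans hK.symm).le).symm
    obtain ⟨i, hiK, hiJ⟩ := Finset.not_subset.mp hnsub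
    rw [Finset.prod_eq_zero (Finset.mem_compl.mpr hiJ) (hinner_zero K hK i hiK), mul_zero]
  have hcancel : (∏ i ∈ Kᶜ, (inner ℝ (n i) v : ℝ) / (inner ℝ (n i) (ν K) : ℝ))
      * ∏ i ∈ Kᶜ, (inner ℝ (n i) (ν K) : ℝ) = ∏ i ∈ Kᶜ, (inner ℝ (n i) v : ℝ) := by
    rw [← Finset.prod_mul_distrib]
    exact Finset.prod_congr rfl fun i hi =>
      div_mul_cancel₀ _ (hinner_ne K hK i (Finset.mem_compl.mp hi))
  rw [hsingle, ← hcancel]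
  ring
end

section
/- (Base case of the representation formula) Let H = {ℓ_1,…,ℓ_N} be N hyperplanes in ℝ^N in general position and φ a linear form on ℝ^N. Then for all x: φ(x) = φ(θ_H) + Σ_{i=1}^N (ℓ_i(x)/ℓ̃_i(n_{H∖ℓ_i})) · φ(n_{H∖ℓ_i}). -/
/-- Base case of the representation formula: for `N = m+1` hyperplanes in general
position with common point `θ` and a linear form `φ`,
`φ(x) = φ(θ) + ∑_i (ℓ_i(x)/ℓ̃_i(ν i)) · φ(ν i)` where `ν i = n_{H∖ℓ_i}`. -/
theorem stmt_12 (m : ℕ) (n : Fin (m + 1) → EuclideanSpace ℝ (Fin (m + 1)))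
    (c : Fin (m + 1) → ℝ) (hn : ∀ i, ‖n i‖ = 1)
    (hgp : Matrix.det (Matrix.of fun i j => n i j) ≠ 0)
    (θ : EuclideanSpace ℝ (Fin (m + 1))) (hθ : ∀ i, (inner ℝ (n i) θ : ℝ) = c i)
    (ν : Fin (m + 1) → EuclideanSpace ℝ (Fin (m + 1)))
    (hν : ∀ i (w : EuclideanSpace ℝ (Fin (m + 1))),
      Matrix.det (Matrix.of (Fin.cons (fun j => w j) (fun k j => n (i.succAbove k) j))) =
        (inner ℝ w (ν i) : ℝ))
    (φ : EuclideanSpace ℝ (Fin (m + 1)) →ₗ[ℝ] ℝ) (x : EuclideanSpace ℝ (Fin (m + 1))) :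
    φ x = φ θ + ∑ i, (((inner ℝ (n i) x : ℝ) - c i) / (inner ℝ (n i) (ν i) : ℝ)) * φ (ν i) := by
  classical
  set M : Matrix (Fin (m+1)) (Fin (m+1)) ℝ := Matrix.of fun i j => n i j with hM
  -- orthogonality: j ≠ i → ⟪n j, ν i⟫ = 0
  have horth : ∀ i j, j ≠ i → (inner ℝ (n j) (ν i) : ℝ) = 0 := by
    intro i j hji
    obtain ⟨k, hk⟩ := Fin.exists_succAbove_eq hji
    rw [← hν i (n j)]
    apply Matrix.det_zero_of_row_eq (i := (0 : Fin (m+1))) (j := k.succ)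
    · exact (Fin.succ_ne_zero k).symm
    · funext l
      simp [hk]
  -- diagonal nonzero
  have hdiag : ∀ i, (inner ℝ (n i) (ν i) : ℝ) ≠ 0 := by
    intro i
    rw [← hν i (n i)]
    have hrow : (Matrix.of (Fin.cons (fun j => n i j) (fun k j => n (i.succAbove k) j)))
        = M.submatrix (⇑(i.cycleRange)⁻¹) id := by
      funext r l
      show _ = M ((i.cycleRange)⁻¹ r) l
      refine Fin.cases ?_ (fun k => ?_) r
      · have : (i.cycleRange)⁻¹ 0 = i := by
          rw [Equiv.Perm.inv_eq_iff_eq, Fin.cycleRange_self]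
        simp [this, hM]
      · have : (i.cycleRange)⁻¹ k.succ = i.succAbove k := by
          rw [Equiv.Perm.inv_eq_iff_eq, Fin.cycleRange_succAbove]
        simp [this, hM]
    rw [hrow, Matrix.det_permute]
    rcases Int.units_eq_one_or (Equiv.Perm.sign (i.cycleRange)⁻¹) with h | h <;>
      simp [h, hgp]
  -- coefficients
  set a : Fin (m+1) → ℝ := fun i => ((inner ℝ (n i) x : ℝ) - c i) / (inner ℝ (n i) (ν i) : ℝ)
    with ha
  set y : EuclideanSpace ℝ (Fin (m+1)) := θ + ∑ i, a i • ν i with hy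
  have hinner : ∀ j, (inner ℝ (n j) y : ℝ) = (inner ℝ (n j) x : ℝ) := by
    intro j
    rw [hy, inner_add_right, inner_sum]
    have : ∀ i, (inner ℝ (n j) (a i • ν i) : ℝ) = a i * (inner ℝ (n j) (ν i) : ℝ) := fun i =>
      real_inner_smul_right _ _ _
    rw [Finset.sum_congr rfl fun i _ => this i,
      Finset.sum_eq_single j (fun i _ hij => by rw [horth i j hij.symm, mul_zero])
        (fun h => absurd (Finset.mem_univ j) h)]
    rw [ha, hθ j]
    show c j + ((inner ℝ (n j) x : ℝ) - c j) / (inner ℝ (n j) (ν j) : ℝ) * (inner ℝ (n j) (ν j) : ℝ) = _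
    rw [div_mul_cancel₀ _ (hdiag j)]
    ring
  -- x = y
  have hxy : x = y := by
    have hM_unit : IsUnit M := by
      rw [Matrix.isUnit_iff_isUnit_det]
      exact isUnit_iff_ne_zero.mpr hgp
    have hinj := Matrix.mulVec_injective_iff_isUnit.mpr hM_unit
    have hmv : ∀ v : EuclideanSpace ℝ (Fin (m+1)),
        M.mulVec (fun k => v k) = fun j => (inner ℝ (n j) v : ℝ) := by
      intro v
      funext j
      simp [Matrix.mulVec, dotProduct, hM, PiLp.inner_apply, RCLike.inner_apply,
        mul_comm]
    have : M.mulVec (fun k => x k) = M.mulVec (fun k => y k) := by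
      rw [hmv, hmv]
      funext j
      exact (hinner j).symm
    have := hinj this
    ext k
    exact congrFun this k
  conv_lhs => rw [hxy, hy]
  rw [map_add, map_sum]
  congr 1
  refine Finset.sum_congr rfl fun i _ => ?_
  rw [map_smul, smul_eq_mul]
end

section
/- (Counterexample when (C2) fails) For ε ≥ 0 and t = 1/s, consider the degree-1 interpolation lattice Θ^{(s)} = {(0,0), (t, t^{2+ε}), (2t, 0)} ⊂ ℝ². Then the Lagrange interpolation polynomial of the monomial x₁² of degree ≤ 1 at Θ^{(s)} equals 2t·x₁ − x₂/t^ε, which does not converge to the Taylor polynomial T_0^1(x₁²) = 0 as s → ∞. -/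
/-- Counterexample when (C2) fails: for `ε ≥ 0` and `t = 1/s`, the affine Lagrange
interpolant of `x₁²` at `{(0,0), (t, t^{2+ε}), (2t, 0)}` is `2t·x₁ - x₂/t^ε`, which does
not converge to the Taylor polynomial `T_0^1(x₁²) = 0` as `s → ∞` (e.g. its value at
`(0, 1)` does not tend to `0`). -/
theorem stmt_18 (ε : ℝ) (hε : 0 ≤ ε) :
    (∀ s : ℕ, 1 ≤ s → ∀ g : ℝ × ℝ → ℝ,
      (∃ a b c : ℝ, ∀ p : ℝ × ℝ, g p = a + b * p.1 + c * p.2) →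
      g (0, 0) = 0 →
      g ((1 : ℝ) / s, ((1 : ℝ) / s) ^ ((2 : ℝ) + ε)) = ((1 : ℝ) / s) ^ (2 : ℕ) →
      g (2 * ((1 : ℝ) / s), 0) = (2 * ((1 : ℝ) / s)) ^ (2 : ℕ) →
      ∀ p : ℝ × ℝ, g p = 2 * ((1 : ℝ) / s) * p.1 - p.2 / ((1 : ℝ) / s) ^ ε) ∧
    ¬ Filter.Tendsto
      (fun s : ℕ => 2 * ((1 : ℝ) / s) * (0 : ℝ) - (1 : ℝ) / ((1 : ℝ) / s) ^ ε)
      Filter.atTop (nhds 0) := by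
  constructor
  · intro s hs g hex h0 h1 h2
    obtain ⟨a, b, c, hg⟩ := hex
    set t : ℝ := 1 / (s : ℝ) with htdef
    have hs' : (0 : ℝ) < s := by exact_mod_cast Nat.lt_of_lt_of_le Nat.zero_lt_one hs
    have ht : 0 < t := by positivity
    have hte : 0 < t ^ ε := Real.rpow_pos_of_pos ht ε
    rw [hg] at h0 h1 h2
    simp only at h0 h1 h2
    have ha : a = 0 := by
      have := h0; nlinarith [this]
    have hb : b = 2 * t := by
      have h2' : a + b * (2 * t) + c * 0 = (2 * t) ^ 2 := h2
      have ht' : t ≠ 0 := ne_of_gt ht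
      field_simp at h2'
      nlinarith [h2']
    have hsplit : t ^ ((2 : ℝ) + ε) = t ^ (2 : ℕ) * t ^ ε := by
      rw [Real.rpow_add ht]
      norm_num [Real.rpow_natCast]
    have hc : c = -(1 / t ^ ε) := by
      have h1' : a + b * t + c * (t ^ (2 : ℕ) * t ^ ε) = t ^ (2 : ℕ) := by
        rw [← hsplit]; exact h1
      rw [ha, hb] at h1'
      have ht2 : (0 : ℝ) < t ^ (2 : ℕ) := by positivity
      field_simp
      nlinarith [h1']
    intro p
    rw [hg, ha, hb, hc]
    field_simp
    ring
  · intro h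
    have h1 := Metric.tendsto_nhds.mp h 1 one_pos
    have h2 : ∀ᶠ s : ℕ in Filter.atTop, (1 : ℕ) ≤ s := Filter.eventually_ge_atTop 1
    obtain ⟨s, hlt', hs⟩ := (h1.and h2).exists
    rw [Real.dist_eq] at hlt'
    have hlt := hlt'
    have hs' : (1 : ℝ) ≤ (s : ℝ) := by exact_mod_cast hs
    have hs0 : (0 : ℝ) < s := by linarith
    have hle : ((1 : ℝ) / s) ^ ε ≤ 1 := by
      apply Real.rpow_le_one (by positivity)
      · rw [div_le_one hs0]; linarith
      · exact hε
    have hpos : (0 : ℝ) < ((1 : ℝ) / s) ^ ε := Real.rpow_pos_of_pos (by positivity) ε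
    have hone : (1 : ℝ) ≤ 1 / ((1 : ℝ) / s) ^ ε := one_le_one_div hpos hle
    rw [abs_lt] at hlt
    have hl := hlt.1
    simp only [mul_zero, zero_sub, sub_zero] at hl
    linarith
end
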